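/- Let K be a field and A a finite-dimensional K-algebra. Let X ⊆ A* and Y, U ⊆ A be K-subspaces, and suppose the multiplication map Y ⊗_K U → A, y ⊗ u ↦ y·u, is injective. Then the linear map Θ : Hom_K(X, A*) ⊕ Hom_K(Y, A) → (X ⊗_K Y ⊗_K U)*, sending (f, g) to the functional x ⊗ y ⊗ z ↦ f(x)(y·z) + x(g(y)·z), is surjective. That is, for every ψ ∈ (X ⊗_K Y ⊗_K U)* there exist K-linear maps f : X → A* and g : Y → A with ψ(x ⊗ y ⊗ z) = f(x)(y·z) + x(g(y)·z) for all x ∈ X, y ∈ Y, z ∈ U. -/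

import Mathlib

open TensorProduct

/-- Let `A` be a finite-dimensional `K`-algebra, `X ⊆ A*`, `Y, U ⊆ A`
subspaces such that the multiplication map `Y ⊗ U → A` is injective. Then the map
`Θ : Hom(X, A*) ⊕ Hom(Y, A) → (X ⊗ Y ⊗ U)*`, `(f, g) ↦ (x ⊗ y ⊗ z ↦ f(x)(y·z) + x(g(y)·z))`,
is surjective: every `ψ ∈ (X ⊗ Y ⊗ U)*` is of the form above for some `f`, `g`. -/
theorem stmt_9 (K : Type*) [Field K] (A : Type*) [Ring A] [Algebra K A]
    [FiniteDimensional K A]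
    (X : Submodule K (Module.Dual K A)) (Y U : Submodule K A)
    (hinj : Function.Injective
      (TensorProduct.lift (((LinearMap.mul K A).comp Y.subtype).compl₂ U.subtype))) :
    ∀ ψ : Module.Dual K ((↥X ⊗[K] ↥Y) ⊗[K] ↥U),
      ∃ (f : ↥X →ₗ[K] Module.Dual K A) (g : ↥Y →ₗ[K] A),
        ∀ (x : ↥X) (y : ↥Y) (z : ↥U),
          ψ ((x ⊗ₜ[K] y) ⊗ₜ[K] z) =
            f x ((y : A) * (z : A)) + (x : Module.Dual K A) ((g y) * (z : A)) := by
  intro ψ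
  set m : (↥Y ⊗[K] ↥U) →ₗ[K] A :=
    TensorProduct.lift (((LinearMap.mul K A).comp Y.subtype).compl₂ U.subtype) with hm
  obtain ⟨p, hp⟩ := LinearMap.exists_leftInverse_of_injective (K := K) (V := ↥Y ⊗[K] ↥U) (V' := A) m (LinearMap.ker_eq_bot.mpr hinj)
  let Ψ : ↥X →ₗ[K] Module.Dual K (↥Y ⊗[K] ↥U) :=
    TensorProduct.curry (ψ.comp (TensorProduct.assoc K ↥X ↥Y ↥U).symm.toLinearMap)
  refine ⟨(LinearMap.lcomp K K p).comp Ψ, 0, fun x y z => ?_⟩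
  have hmy : m (y ⊗ₜ[K] z) = (y : A) * (z : A) := rfl
  have hpid : p ((y : A) * (z : A)) = y ⊗ₜ[K] z := by
    rw [← hmy, ← LinearMap.comp_apply, hp, LinearMap.id_apply]
  simp [Ψ, hpid]
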